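/- Let a ∈ [0, 1), b ∈ [0, 1], d > 0 and θ ∈ ℝ. Define D(λ) = (1 − λ·a − (1−λ)·b)/((1−λ)·d) for λ ∈ [0, 1). Then: (i) D is differentiable with D′(λ) = (1 − a)/((1−λ)²·d) > 0, so D is strictly increasing on [0,1); (ii) D(λ) → ∞ as λ → 1⁻; (iii) consequently q̂(λ) := max{0, θ − D(λ)} is nonincreasing in λ, and there exists λ̄ < 1 such that q̂(λ) = 0 for all λ ∈ [λ̄, 1). -/

import Mathlib

/-- For `a ∈ [0,1)`, `b ∈ [0,1]`, `d > 0`, the distortion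
`D(λ) = (1 − λa − (1−λ)b)/((1−λ)d)` has derivative `(1−a)/((1−λ)²d) > 0` on
`[0,1)`, is strictly increasing there, tends to `+∞` as `λ → 1⁻`, and hence
`q̂(λ) = max{0, θ − D(λ)}` is nonincreasing in `λ` and vanishes for all `λ`
beyond some threshold `λ̄ < 1`. -/
theorem stmt_13 (a b d θ : ℝ)
    (ha : a ∈ Set.Ico (0:ℝ) 1) (hb : b ∈ Set.Icc (0:ℝ) 1) (hd : 0 < d)
    (D : ℝ → ℝ)
    (hD : ∀ lam, D lam = (1 - lam * a - (1 - lam) * b) / ((1 - lam) * d)) :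
    (∀ lam ∈ Set.Ico (0:ℝ) 1,
      HasDerivAt D ((1 - a) / ((1 - lam) ^ 2 * d)) lam) ∧
    (∀ lam ∈ Set.Ico (0:ℝ) 1, 0 < (1 - a) / ((1 - lam) ^ 2 * d)) ∧
    StrictMonoOn D (Set.Ico (0:ℝ) 1) ∧
    Filter.Tendsto D (nhdsWithin 1 (Set.Iio 1)) Filter.atTop ∧
    AntitoneOn (fun lam => max 0 (θ - D lam)) (Set.Ico (0:ℝ) 1) ∧
    (∃ lb, lb < 1 ∧ ∀ lam, lb ≤ lam → lam < 1 → max 0 (θ - D lam) = 0) := by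
  obtain ⟨ha0, ha1⟩ := ha
  have hDfun : D = fun lam => (1 - lam * a - (1 - lam) * b) / ((1 - lam) * d) :=
    funext hD
  -- derivative on all of Iio 1
  have hderiv : ∀ lam : ℝ, lam < 1 →
      HasDerivAt D ((1 - a) / ((1 - lam) ^ 2 * d)) lam := by
    intro lam hlam
    have h1 : (0:ℝ) < 1 - lam := by linarith
    have hne : (1 - lam) * d ≠ 0 := by positivity
    have hN : HasDerivAt (fun l : ℝ => 1 - l * a - (1 - l) * b)
        (0 - 1 * a - (0 - 1) * b) lam := by
      exact (((hasDerivAt_const lam (1:ℝ)).sub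
        ((hasDerivAt_id lam).mul_const a)).sub
        (((hasDerivAt_const lam (1:ℝ)).sub (hasDerivAt_id lam)).mul_const b))
    have hM : HasDerivAt (fun l : ℝ => (1 - l) * d) ((0 - 1) * d) lam :=
      ((hasDerivAt_const lam (1:ℝ)).sub (hasDerivAt_id lam)).mul_const d
    have := hN.div hM hne
    rw [hDfun]
    refine this.congr_deriv ?_
    rw [div_eq_div_iff (pow_ne_zero 2 hne) (mul_ne_zero (pow_ne_zero 2 h1.ne') hd.ne')]
    ring
  have hmono : StrictMonoOn D (Set.Ico (0:ℝ) 1) := by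
    apply StrictMonoOn.mono (s := Set.Iio (1:ℝ)) ?_ (fun x hx => hx.2)
    apply strictMonoOn_of_hasDerivWithinAt_pos (convex_Iio (1:ℝ))
      (f' := fun lam => (1 - a) / ((1 - lam) ^ 2 * d))
    · exact fun x hx => ((hderiv x hx).continuousAt).continuousWithinAt
    · intro x hx
      rw [interior_Iio] at hx
      exact ((hderiv x hx).hasDerivWithinAt)
    · intro x hx
      rw [interior_Iio] at hx
      have h1 : (0:ℝ) < 1 - x := by linarith [hx.out]
      have : (0:ℝ) < 1 - a := by linarith
      positivity
  have htend : Filter.Tendsto D (nhdsWithin 1 (Set.Iio 1)) Filter.atTop := by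
    have hDeq : ∀ lam, D lam = (1 - lam * a - (1 - lam) * b) * ((1 - lam) * d)⁻¹ := by
      intro lam; rw [hD lam, div_eq_mul_inv]
    have hN : Filter.Tendsto (fun lam : ℝ => 1 - lam * a - (1 - lam) * b)
        (nhdsWithin 1 (Set.Iio 1)) (nhds (1 - a)) := by
      have : Filter.Tendsto (fun lam : ℝ => 1 - lam * a - (1 - lam) * b)
          (nhds 1) (nhds (1 - 1 * a - (1 - 1) * b)) := by
        apply Continuous.tendsto
        continuity
      simpa using this.mono_left nhdsWithin_le_nhds
    have hM : Filter.Tendsto (fun lam : ℝ => (1 - lam) * d)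
        (nhdsWithin 1 (Set.Iio 1)) (nhdsWithin 0 (Set.Ioi 0)) := by
      apply tendsto_nhdsWithin_of_tendsto_nhds_of_eventually_within
      · have : Filter.Tendsto (fun lam : ℝ => (1 - lam) * d)
            (nhds 1) (nhds ((1 - 1) * d)) := by
          apply Continuous.tendsto; continuity
        simpa using this.mono_left nhdsWithin_le_nhds
      · filter_upwards [self_mem_nhdsWithin] with lam (hlam : lam < 1)
        have : (0:ℝ) < 1 - lam := by linarith
        exact mul_pos this hd
    have hinv : Filter.Tendsto (fun lam : ℝ => ((1 - lam) * d)⁻¹)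
        (nhdsWithin 1 (Set.Iio 1)) Filter.atTop := hM.inv_tendsto_nhdsGT_zero
    have := hN.pos_mul_atTop (by linarith : (0:ℝ) < 1 - a) hinv
    simpa only [← hDeq] using this
  refine ⟨fun lam hlam => hderiv lam hlam.2, ?_, ?_, ?_, ?_, ?_⟩
  · intro lam hlam
    have h1 : (0:ℝ) < 1 - lam := by linarith [hlam.2]
    have : (0:ℝ) < 1 - a := by linarith
    positivity
  · exact hmono
  · exact htend
  · -- antitone
    intro x hx y hy hxy
    simp only []
    rcases eq_or_lt_of_le hxy with rfl | hlt
    · exact le_rfl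
    · have : D x ≤ D y := (hmono hx hy hlt).le
      exact max_le_max le_rfl (by linarith)
  · -- vanishing threshold
    have hev : ∀ᶠ lam in nhdsWithin 1 (Set.Iio 1), θ ≤ D lam :=
      htend.eventually (Filter.eventually_ge_atTop θ)
    rw [Filter.eventually_iff, mem_nhdsLT_iff_exists_Ioo_subset] at hev
    obtain ⟨l, hl, hsub⟩ := hev
    refine ⟨(l + 1) / 2, by simp at hl; linarith, fun lam hlb hlam => ?_⟩
    have hlam' : l < lam := by simp at hl; linarith
    have : θ ≤ D lam := hsub ⟨hlam', hlam⟩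
    exact max_eq_left (by linarith)
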